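/- Let r ≥ 1. If ms_r(λK_{n_1,…,n_k}) = r·n_1, then n_1^{u−1} divides r_2, or r_2 > 0 and (⌊r_2/n_1^{u−1}⌋ + 1)·⌊λN/r_2⌋ ≤ λN' ≤ ⌊r_2/n_1^{u−1}⌋·(⌊λN/r_2⌋ + 1). -/

import Mathlib

/-- A hypergraph: a finite vertex type, a finite edge (label) type and an incidence
relation; distinct (parallel) edges may be incident with the same vertices. -/
structure MSHypergraph where
  V : Type
  E : Type
  fintV : Fintype V
  fintE : Fintype E
  inc : E → V → Bool

namespace MSHypergraph

/-- The number ε of edges of `H`. -/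
def edgeCard (H : MSHypergraph) : ℕ :=
  letI := H.fintE
  Fintype.card H.E

/-- The degree of a vertex: the number of edges incident with it. -/
def degree (H : MSHypergraph) (v : H.V) : ℕ :=
  letI := H.fintE
  (Finset.univ.filter (fun e => H.inc e v = true)).card

/-- The maximum degree Δ(H). -/
def maxDegree (H : MSHypergraph) : ℕ :=
  letI := H.fintV
  Finset.univ.sup H.degree

/-- An ordering (labelling) of `H`, encoded by its ε-periodic enumeration:
`f i` is the edge whose label is `i % ε`; on `[ε]`, `f` is a bijection onto the
edge set. -/
structure IsOrdering (H : MSHypergraph) (f : ℕ → H.E) : Prop where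
  periodic : ∀ i, f (i + H.edgeCard) = f i
  inj : ∀ i j, i < H.edgeCard → j < H.edgeCard → f i = f j → i = j
  surj : ∀ e : H.E, ∃ i, i < H.edgeCard ∧ f i = e

/-- The degree of `v` in the hypergraph `H(S)` formed (with multiplicity) by the
sequence `S` of `s` (cyclically) consecutive edges with labels `j, …, j+s-1`
taken modulo ε. -/
def windowDeg (H : MSHypergraph) (f : ℕ → H.E) (j s : ℕ) (v : H.V) : ℕ :=
  ((Finset.range s).filter (fun i => H.inc (f (j + i)) v = true)).card

/-- Every sequence of `s` consecutive edges of the ordering `f` forms a hypergraph of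
maximum degree at most `r`.  A window of `s` consecutive edges starts at a label `j`
with `j + s ≤ (a+1)·ε`, where `a·ε ≤ s < (a+1)·ε` (i.e. `a = s / ε`). -/
def msOK (H : MSHypergraph) (f : ℕ → H.E) (r s : ℕ) : Prop :=
  ∀ j v, j + s ≤ (s / H.edgeCard + 1) * H.edgeCard → H.windowDeg f j s v ≤ r

/-- Every sequence of `s` cyclically consecutive edges of the ordering `f` forms a
hypergraph of maximum degree at most `r`. -/
def cmsOK (H : MSHypergraph) (f : ℕ → H.E) (r s : ℕ) : Prop :=
  ∀ j v, H.windowDeg f j s v ≤ r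

/-- ms_r(ℓ): the largest `s` such that every `s` consecutive edges of `ℓ` form a
hypergraph of maximum degree at most `r`. -/
noncomputable def msrOf (H : MSHypergraph) (f : ℕ → H.E) (r : ℕ) : ℕ :=
  sSup {s | H.msOK f r s}

/-- cms_r(ℓ). -/
noncomputable def cmsrOf (H : MSHypergraph) (f : ℕ → H.E) (r : ℕ) : ℕ :=
  sSup {s | H.cmsOK f r s}

/-- ms_r(H): the maximum of ms_r(ℓ) over all orderings ℓ of H. -/
noncomputable def msr (H : MSHypergraph) (r : ℕ) : ℕ :=
  sSup {s | ∃ f, H.IsOrdering f ∧ H.msOK f r s}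

/-- cms_r(H): the maximum of cms_r(ℓ) over all orderings ℓ of H. -/
noncomputable def cmsr (H : MSHypergraph) (r : ℕ) : ℕ :=
  sSup {s | ∃ f, H.IsOrdering f ∧ H.cmsOK f r s}

end MSHypergraph

/-- The complete multi-k-partite k-graph λ·K_{n 0, …, n (k-1)} with edge
multiplicity `lam`: the vertex set is the disjoint union of the parts
`N_i = Fin (n i)`, and for each choice of one vertex from each part there are
`lam` parallel edges incident with exactly those `k` vertices. -/
def lamK (k lam : ℕ) (n : Fin k → ℕ) : MSHypergraph where
  V := Σ i : Fin k, Fin (n i)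
  E := Fin lam × (∀ i : Fin k, Fin (n i))
  fintV := inferInstance
  fintE := inferInstance
  inc := fun e v => decide (e.2 v.1 = v.2)


/-! ### Auxiliary material -/

namespace MsAux

def prodSndSubtype {A B : Type*} (p : B → Prop) : {y : A × B // p y.2} ≃ A × {b // p b} where
  toFun y := (y.1.1, ⟨y.1.2, y.2⟩)
  invFun q := ⟨(q.1, q.2.1), q.2.2⟩
  left_inv := by rintro ⟨⟨a, b⟩, h⟩; rfl
  right_inv := by rintro ⟨a, ⟨b, h⟩⟩; rfl

def piFixedEquiv {ι : Type*} [DecidableEq ι] (p : ι → Prop) [DecidablePred p]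
    (β : ι → Type*) (c : ∀ i, β i) :
    {g : ∀ i, β i // ∀ i, p i → g i = c i} ≃ (∀ i : {x // ¬ p x}, β i) where
  toFun g i := g.1 i.1
  invFun h := ⟨fun i => if hp : p i then c i else h ⟨i, hp⟩, fun i hi => by simp [hi]⟩
  left_inv := by
    rintro ⟨g, hg⟩
    ext i
    by_cases hp : p i <;> simp [hp, hg]
  right_inv := by
    intro h
    funext i
    simp [i.2]

lemma card_pi_fixed {ι : Type*} [DecidableEq ι] [Fintype ι] (p : ι → Prop) [DecidablePred p]
    (m : ι → ℕ) (c : ∀ i, Fin (m i)) :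
    Fintype.card {g : ∀ i, Fin (m i) // ∀ i, p i → g i = c i}
      = ∏ i ∈ Finset.univ.filter (fun i => ¬ p i), m i := by
  rw [Fintype.card_congr (piFixedEquiv p _ c), Fintype.card_pi]
  rw [Finset.prod_subtype (p := fun i => ¬ p i) (Finset.univ.filter (fun i => ¬ p i)) (by simp)
    (fun i => m i)]
  · simp
  · infer_instance

lemma card_prod_pi_fixed {lam : ℕ} {ι : Type*} [DecidableEq ι] [Fintype ι]
    (p : ι → Prop) [DecidablePred p] (m : ι → ℕ) (c : ∀ i, Fin (m i)) :
    Fintype.card {e : Fin lam × ∀ i, Fin (m i) // ∀ i, p i → e.2 i = c i}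
      = lam * ∏ i ∈ Finset.univ.filter (fun i => ¬ p i), m i := by
  rw [Fintype.card_congr (prodSndSubtype (fun g : ∀ i, Fin (m i) => ∀ i, p i → g i = c i)),
    Fintype.card_prod, Fintype.card_fin, card_pi_fixed p m c]

lemma periodic_count (g : ℕ → ℕ) (p ε : ℕ) (hp : 0 < p)
    (hper : ∀ j, j + p < ε → g (j + p) = g j) :
    ∑ j ∈ Finset.range ε, g j
        = (ε / p) * (∑ j ∈ Finset.range p, g j) + ∑ j ∈ Finset.range (ε % p), g j
      ∧ ∑ j ∈ Finset.range (ε % p), g j ≤ ∑ j ∈ Finset.range p, g j := by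
  have hmulper : ∀ a j, j + a * p < ε → g (j + a * p) = g j := by
    intro a
    induction a with
    | zero => simp
    | succ a ih =>
      intro j hj
      rw [Nat.succ_mul] at hj ⊢
      rw [← Nat.add_assoc, hper (j + a * p) (by omega), ih j (by omega)]
  have hblock : ∀ a, a * p ≤ ε →
      ∑ j ∈ Finset.range (a * p), g j = a * ∑ j ∈ Finset.range p, g j := by
    intro a
    induction a with
    | zero => simp
    | succ a ih =>
      intro ha
      rw [Nat.succ_mul] at ha ⊢
      rw [Finset.sum_range_add, ih (by omega), Nat.succ_mul]
      congr 1
      refine Finset.sum_congr rfl fun j hj => ?_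
      rw [Finset.mem_range] at hj
      rw [show a * p + j = j + a * p from by ring]
      exact hmulper a j (by omega)
  have hdm : (ε / p) * p + ε % p = ε := by rw [Nat.mul_comm]; exact Nat.div_add_mod ε p
  have hmlt : ε % p < p := Nat.mod_lt _ hp
  constructor
  · conv_lhs => rw [show ε = (ε / p) * p + ε % p from by omega]
    rw [Finset.sum_range_add, hblock (ε / p) (by omega)]
    congr 1
    refine Finset.sum_congr rfl fun j hj => ?_
    rw [Finset.mem_range] at hj
    rw [show (ε / p) * p + j = j + (ε / p) * p from by ring]
    exact hmulper (ε / p) j (by omega)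
  · exact Finset.sum_le_sum_of_subset (Finset.range_subset_range.2 (le_of_lt hmlt))

lemma card_filter_lt (k u : ℕ) (huk : u ≤ k) :
    ((Finset.univ : Finset (Fin k)).filter (fun i : Fin k => (i : ℕ) < u)).card = u := by
  rw [← Fintype.card_subtype]
  rw [Fintype.card_congr
    (⟨fun i => ⟨i.1.1, i.2⟩, fun j => ⟨⟨j.1, lt_of_lt_of_le j.2 huk⟩, j.2⟩,
      fun i => rfl, fun j => rfl⟩ : {i : Fin k // (i : ℕ) < u} ≃ Fin u)]
  exact Fintype.card_fin u

end MsAux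

namespace MSHypergraph

variable {H : MSHypergraph} {f : ℕ → H.E}

lemma windowDeg_eq_sum (j s : ℕ) (v : H.V) :
    H.windowDeg f j s v = ∑ i ∈ Finset.range s, (if H.inc (f (j + i)) v = true then 1 else 0) :=
  Finset.card_filter _ _

lemma windowDeg_add (j s t : ℕ) (v : H.V) :
    H.windowDeg f j (s + t) v = H.windowDeg f j s v + H.windowDeg f (j + s) t v := by
  simp only [windowDeg_eq_sum, Finset.sum_range_add]
  congr 1
  refine Finset.sum_congr rfl fun i _ => ?_
  rw [Nat.add_assoc]

lemma windowDeg_one (j : ℕ) (v : H.V) :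
    H.windowDeg f j 1 v = if H.inc (f j) v = true then 1 else 0 := by
  rw [windowDeg_eq_sum, Finset.sum_range_one, Nat.add_zero]

lemma windowDeg_mono {s s' : ℕ} (h : s ≤ s') (j : ℕ) (v : H.V) :
    H.windowDeg f j s v ≤ H.windowDeg f j s' v :=
  Finset.card_le_card (Finset.filter_subset_filter _ (Finset.range_subset_range.2 h))

lemma windowDeg_slide (j s : ℕ) (v : H.V) :
    H.windowDeg f j 1 v + H.windowDeg f (j + 1) s v
      = H.windowDeg f j s v + H.windowDeg f (j + s) 1 v := by
  have h1 : H.windowDeg f j (s + 1) v = H.windowDeg f j s v + H.windowDeg f (j + s) 1 v :=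
    windowDeg_add j s 1 v
  have h2 : H.windowDeg f j (1 + s) v = H.windowDeg f j 1 v + H.windowDeg f (j + 1) s v :=
    windowDeg_add j 1 s v
  rw [Nat.add_comm s 1] at h1
  omega

lemma count_eq (ord : H.IsOrdering f) (P : H.E → Prop) [DecidablePred P] :
    letI := H.fintE
    ((Finset.range H.edgeCard).filter (fun i => P (f i))).card
      = (Finset.univ.filter P).card := by
  letI := H.fintE
  refine Finset.card_bij (fun i _ => f i) ?_ ?_ ?_
  · intro a ha
    simp only [Finset.mem_filter, Finset.mem_range] at ha ⊢
    exact ⟨Finset.mem_univ _, ha.2⟩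
  · intro a ha b hb hfab
    simp only [Finset.mem_filter, Finset.mem_range] at ha hb
    exact ord.inj a b ha.1 hb.1 hfab
  · intro e he
    simp only [Finset.mem_filter] at he
    obtain ⟨i, hi, hfi⟩ := ord.surj e
    exact ⟨i, by simp [Finset.mem_filter, hi, hfi, he.2], hfi⟩

lemma windowDeg_zero_full (ord : H.IsOrdering f) (v : H.V) :
    H.windowDeg f 0 H.edgeCard v = H.degree v := by
  letI := H.fintE
  have := count_eq ord (fun e => H.inc e v = true)
  simpa [windowDeg, degree] using this

lemma windowDeg_full (ord : H.IsOrdering f) (j : ℕ) (v : H.V) :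
    H.windowDeg f j H.edgeCard v = H.degree v := by
  induction j with
  | zero => exact windowDeg_zero_full ord v
  | succ j ih =>
    have hs := windowDeg_slide (f := f) j H.edgeCard v
    rw [windowDeg_one, windowDeg_one, ord.periodic j] at hs
    omega

lemma windowDeg_shift (ord : H.IsOrdering f) (j m s : ℕ) (v : H.V) :
    H.windowDeg f (j + m * H.edgeCard) s v = H.windowDeg f j s v := by
  have key : ∀ i, f (i + m * H.edgeCard) = f i := by
    intro i
    induction m with
    | zero => simp
    | succ m ih => rw [Nat.succ_mul, ← Nat.add_assoc, ord.periodic, ih]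
  unfold windowDeg
  congr 1
  refine Finset.filter_congr fun i _ => ?_
  rw [show j + m * H.edgeCard + i = (j + i) + m * H.edgeCard by ring, key]

lemma windowDeg_mul (ord : H.IsOrdering f) (j m : ℕ) (v : H.V) :
    H.windowDeg f j (m * H.edgeCard) v = m * H.degree v := by
  induction m with
  | zero => simp [windowDeg]
  | succ m ih =>
    rw [Nat.succ_mul, windowDeg_add, ih, windowDeg_full ord, Nat.succ_mul]

lemma exists_ordering (H : MSHypergraph) (h : 0 < H.edgeCard) : ∃ f, H.IsOrdering f := by
  letI := H.fintE
  let φ : Fin H.edgeCard ≃ H.E := (Fintype.equivFin H.E).symm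
  refine ⟨fun i => φ ⟨i % H.edgeCard, Nat.mod_lt _ h⟩, ?_, ?_, ?_⟩
  · intro i
    simp [Nat.add_mod_right]
  · intro i j hi hj hij
    have := φ.injective hij
    rw [Fin.mk.injEq, Nat.mod_eq_of_lt hi, Nat.mod_eq_of_lt hj] at this
    exact this
  · intro e
    refine ⟨(φ.symm e).val, (φ.symm e).isLt, ?_⟩
    have : (⟨(φ.symm e).val % H.edgeCard, Nat.mod_lt _ h⟩ : Fin H.edgeCard) = φ.symm e :=
      Fin.ext (Nat.mod_eq_of_lt (φ.symm e).isLt)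
    rw [this]
    simp

end MSHypergraph

section LamKLemmas

variable {k lam : ℕ} {n : Fin k → ℕ}

lemma lamK_edgeCard : (lamK k lam n).edgeCard = lam * ∏ i, n i := by
  show Fintype.card (Fin lam × ∀ i, Fin (n i)) = lam * ∏ i, n i
  rw [Fintype.card_prod, Fintype.card_fin, Fintype.card_pi]
  simp

lemma lamK_degree (hpos : ∀ i, 1 ≤ n i) (i0 : Fin k) (x : Fin (n i0)) :
    (lamK k lam n).degree ⟨i0, x⟩ = lam * ∏ j ∈ Finset.univ.erase i0, n j := by
  classical
  show (Finset.univ.filter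
      (fun e : Fin lam × ∀ i, Fin (n i) => decide (e.2 i0 = x) = true)).card = _
  have h1 : (Finset.univ.filter
        (fun e : Fin lam × ∀ i, Fin (n i) => decide (e.2 i0 = x) = true))
      = (Finset.univ.filter (fun e : Fin lam × ∀ i, Fin (n i) =>
          ∀ i, i = i0 → e.2 i = Function.update (fun i => (⟨0, hpos i⟩ : Fin (n i))) i0 x i)) := by
    apply Finset.filter_congr
    intro e _
    simp only [decide_eq_true_eq]
    constructor
    · rintro h i rfl; simpa using h
    · intro h; have := h i0 rfl; simpa using this
  rw [h1, ← Fintype.card_subtype]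
  have h2 := MsAux.card_prod_pi_fixed (lam := lam) (fun i => i = i0) n
      (Function.update (fun i => (⟨0, hpos i⟩ : Fin (n i))) i0 x)
  have h3 : lam * ∏ i ∈ Finset.univ.filter (fun i : Fin k => ¬ i = i0), n i
      = lam * ∏ j ∈ Finset.univ.erase i0, n j := by
    congr 1
    rw [← Finset.filter_ne']
  rw [← h3]
  convert h2 using 2

lemma lamK_sum_part (f : ℕ → (lamK k lam n).E) (j s : ℕ) (i : Fin k) :
    ∑ x : Fin (n i), (lamK k lam n).windowDeg f j s ⟨i, x⟩ = s := by
  classical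
  rw [Finset.sum_congr rfl fun x _ =>
    MSHypergraph.windowDeg_eq_sum (H := lamK k lam n) (f := f) j s ⟨i, x⟩]
  rw [Finset.sum_comm]
  have hinner : ∀ l : ℕ,
      (∑ x : Fin (n i), if (lamK k lam n).inc (f (j + l)) ⟨i, x⟩ = true then 1 else 0) = 1 := by
    intro l
    have h2 : ∀ x : Fin (n i),
        ((lamK k lam n).inc (f (j + l)) ⟨i, x⟩ = true) ↔ ((f (j + l)).2 i = x) := by
      intro x
      show (decide ((f (j + l)).2 i = x) = true) ↔ _
      simp
    simp only [h2]
    rw [Finset.sum_ite_eq Finset.univ ((f (j + l)).2 i) (fun _ => 1)]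
    simp
  rw [Finset.sum_congr rfl (fun l _ => hinner l), Finset.sum_const, Finset.card_range,
    smul_eq_mul, Nat.mul_one]

lemma lamK_count_window {u : ℕ} (f : ℕ → (lamK k lam n).E)
    (ord : (lamK k lam n).IsOrdering f) (t : ∀ i, Fin (n i)) :
    ((Finset.range (lamK k lam n).edgeCard).filter
        (fun j => ∀ i : Fin k, (i : ℕ) < u → (f j).2 i = t i)).card
      = lam * ∏ i ∈ Finset.univ.filter (fun i : Fin k => ¬ (i : ℕ) < u), n i := by
  classical
  letI : Fintype (lamK k lam n).E := (lamK k lam n).fintE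
  rw [MSHypergraph.count_eq ord (fun e => ∀ i : Fin k, (i : ℕ) < u → e.2 i = t i)]
  rw [← Fintype.card_subtype]
  have h2 := MsAux.card_prod_pi_fixed (lam := lam) (fun i : Fin k => (i : ℕ) < u) n t
  convert h2 using 2
  rfl

lemma lamK_count_tuples {u : ℕ} (c : ∀ i, Fin (n i)) :
    ((Finset.univ : Finset (∀ i, Fin (n i))).filter
        (fun t => ∀ i : Fin k, (i : ℕ) < u → c i = t i)).card
      = ∏ i ∈ Finset.univ.filter (fun i : Fin k => ¬ (i : ℕ) < u), n i := by
  classical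
  have h1 : ((Finset.univ : Finset (∀ i, Fin (n i))).filter
        (fun t => ∀ i : Fin k, (i : ℕ) < u → c i = t i))
      = ((Finset.univ : Finset (∀ i, Fin (n i))).filter
        (fun t => ∀ i : Fin k, (i : ℕ) < u → t i = c i)) := by
    apply Finset.filter_congr
    intro t _
    constructor
    · intro h i hi; exact (h i hi).symm
    · intro h i hi; exact (h i hi).symm
  rw [h1, ← Fintype.card_subtype]
  have h2 := MsAux.card_pi_fixed (fun i : Fin k => (i : ℕ) < u) n c
  convert h2 using 2

end LamKLemmas

/-- Lemma (necessary condition, non-cyclic): if `ms_r(λK_{n_1,…,n_k}) = r·n_1`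
then `n_1^(u-1) ∣ r_2`, or `r_2 > 0` and the floor inequalities hold. -/
theorem ms_eq_necessary
    (k lam u : ℕ) (n : Fin k → ℕ)
    (hk : 2 ≤ k) (hlam : 1 ≤ lam)
    (hu1 : 1 ≤ u) (huk : u ≤ k)
    (hpos : ∀ i, 1 ≤ n i)
    (hmono : ∀ i j : Fin k, i ≤ j → n i ≤ n j)
    (heq : ∀ i : Fin k, (i : ℕ) < u → n i = n ⟨0, by omega⟩)
    (hlt : ∀ i : Fin k, u ≤ (i : ℕ) → n ⟨0, by omega⟩ < n i)
    (N N' : ℕ)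
    (hN : N = ∏ i ∈ Finset.univ.filter (fun i : Fin k => (i : ℕ) ≠ 0), n i)
    (hN' : N' = ∏ i ∈ Finset.univ.filter (fun i : Fin k => u ≤ (i : ℕ)), n i)
    (r r1 r2 : ℕ) (hr : 1 ≤ r)
    (hrdec : r = r1 * (lam * N) + r2) (hr2 : r2 < lam * N)
    (hms : (lamK k lam n).msr r = r * n ⟨0, by omega⟩) :
    (n ⟨0, by omega⟩) ^ (u - 1) ∣ r2 ∨ (0 < r2 ∧ (r2 / (n ⟨0, by omega⟩) ^ (u - 1) + 1) * (lam * N / r2) ≤ lam * N' ∧ lam * N' ≤ (r2 / (n ⟨0, by omega⟩) ^ (u - 1)) * (lam * N / r2 + 1)) := by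
  classical
  have hk0 : 0 < k := by omega
  by_cases hdvd : (n ⟨0, hk0⟩) ^ (u - 1) ∣ r2
  · exact Or.inl hdvd
  have hn1pos : 0 < n ⟨0, hk0⟩ := hpos _
  have hNpos : 0 < N := by
    rw [hN]; exact Finset.prod_pos fun i _ => hpos i
  have hN'pos : 0 < N' := by
    rw [hN']; exact Finset.prod_pos fun i _ => hpos i
  have hr2pos : 0 < r2 := by
    rcases Nat.eq_zero_or_pos r2 with h | h
    · exact absurd (by rw [h]; exact dvd_zero _) hdvd
    · exact h
  have hfilter0 : Finset.univ.filter (fun i : Fin k => (i : ℕ) ≠ 0)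
      = Finset.univ.erase (⟨0, hk0⟩ : Fin k) := by
    rw [← Finset.filter_ne']
    apply Finset.filter_congr
    intro i _
    simp [Fin.ext_iff]
  have hprod_all : ∏ i, n i = n ⟨0, hk0⟩ * N := by
    rw [hN, hfilter0]
    exact (Finset.mul_prod_erase Finset.univ n (Finset.mem_univ _)).symm
  set H : MSHypergraph := lamK k lam n with hH
  have hε : H.edgeCard = lam * (n ⟨0, hk0⟩ * N) := by
    rw [hH, lamK_edgeCard, hprod_all]
  have hεpos : 0 < H.edgeCard := by
    rw [hε]; exact Nat.mul_pos hlam (Nat.mul_pos hn1pos hNpos)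
  have hNN' : ∏ i ∈ Finset.univ.filter (fun i : Fin k => ¬ (i : ℕ) < u), n i = N' := by
    rw [hN']
    apply Finset.prod_congr _ fun _ _ => rfl
    apply Finset.filter_congr
    intro i _
    simp [Nat.not_lt]
  have hdeg : ∀ (i : Fin k), (i : ℕ) < u → ∀ x : Fin (n i), H.degree ⟨i, x⟩ = lam * N := by
    intro i hi x
    have h1 := lamK_degree (k := k) (lam := lam) (n := n) hpos i x
    have h2 : n i * ∏ j ∈ Finset.univ.erase i, n j = n i * N := by
      rw [Finset.mul_prod_erase Finset.univ n (Finset.mem_univ i), hprod_all, heq i hi]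
    have h3 : ∏ j ∈ Finset.univ.erase i, n j = N :=
      Nat.eq_of_mul_eq_mul_left (hpos i) h2
    rw [hH] at *
    rw [h1, h3]
  have hdeg0 : 0 < H.degree ⟨⟨0, hk0⟩, ⟨0, hn1pos⟩⟩ := by
    rw [hdeg ⟨0, hk0⟩ (by show 0 < u; omega)]
    exact Nat.mul_pos hlam hNpos
  have hne : Set.Nonempty {s | ∃ f, H.IsOrdering f ∧ H.msOK f r s} := by
    obtain ⟨f0, ord0⟩ := MSHypergraph.exists_ordering H hεpos
    exact ⟨0, f0, ord0, fun j v _ => by simp [MSHypergraph.windowDeg]⟩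
  have hbdd : BddAbove {s | ∃ f, H.IsOrdering f ∧ H.msOK f r s} := by
    refine ⟨(r + 1) * H.edgeCard, ?_⟩
    rintro s ⟨f, ord, hok⟩
    have hdm := Nat.div_add_mod s H.edgeCard
    have hmlt : s % H.edgeCard < H.edgeCard := Nat.mod_lt _ hεpos
    have h0 : 0 + s ≤ (s / H.edgeCard + 1) * H.edgeCard := by
      have hEE : (s / H.edgeCard + 1) * H.edgeCard
          = H.edgeCard * (s / H.edgeCard) + H.edgeCard := by ring
      omega
    have hle := hok 0 ⟨⟨0, hk0⟩, ⟨0, hn1pos⟩⟩ h0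
    have hlow : (s / H.edgeCard) * H.degree ⟨⟨0, hk0⟩, ⟨0, hn1pos⟩⟩
        ≤ H.windowDeg f 0 s ⟨⟨0, hk0⟩, ⟨0, hn1pos⟩⟩ := by
      rw [← MSHypergraph.windowDeg_mul ord 0 (s / H.edgeCard) ⟨⟨0, hk0⟩, ⟨0, hn1pos⟩⟩]
      exact MSHypergraph.windowDeg_mono (Nat.div_mul_le_self s H.edgeCard) 0 _
    have h4 : s / H.edgeCard ≤ (s / H.edgeCard) * H.degree ⟨⟨0, hk0⟩, ⟨0, hn1pos⟩⟩ :=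
      Nat.le_mul_of_pos_right _ hdeg0
    have hqr : s / H.edgeCard ≤ r := by omega
    have h5 : H.edgeCard * (s / H.edgeCard) ≤ H.edgeCard * r :=
      Nat.mul_le_mul_left H.edgeCard hqr
    calc s = H.edgeCard * (s / H.edgeCard) + s % H.edgeCard := by omega
      _ ≤ H.edgeCard * r + H.edgeCard := by omega
      _ = (r + 1) * H.edgeCard := by ring
  have hsup := Nat.sSup_mem hne hbdd
  rw [MSHypergraph.msr] at hms
  rw [hms] at hsup
  obtain ⟨f, ord, hok0⟩ := hsup
  have hok : H.msOK f r (r * n ⟨0, hk0⟩) := hok0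
  set p := r2 * n ⟨0, hk0⟩ with hp
  have hppos : 0 < p := Nat.mul_pos hr2pos hn1pos
  have hpε : p < H.edgeCard := by
    rw [hε, hp]
    calc r2 * n ⟨0, hk0⟩ < (lam * N) * n ⟨0, hk0⟩ := by
          exact Nat.mul_lt_mul_of_lt_of_le hr2 (le_refl _) hn1pos
      _ = lam * (n ⟨0, hk0⟩ * N) := by ring
  have hsdecomp : r * n ⟨0, hk0⟩ = r1 * H.edgeCard + p := by
    rw [hrdec, hε, hp]; ring
  have hdiv : (r * n ⟨0, hk0⟩) / H.edgeCard = r1 := by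
    rw [hsdecomp, show r1 * H.edgeCard + p = H.edgeCard * r1 + p from by ring,
      Nat.mul_add_div hεpos, Nat.div_eq_of_lt hpε, Nat.add_zero]
  have hwle : ∀ j, j + p ≤ H.edgeCard → ∀ (i : Fin k), (i : ℕ) < u → ∀ x : Fin (n i),
      H.windowDeg f j p ⟨i, x⟩ ≤ r2 := by
    intro j hj i hi x
    have hcond : j + r * n ⟨0, hk0⟩ ≤ ((r * n ⟨0, hk0⟩) / H.edgeCard + 1) * H.edgeCard := by
      rw [hdiv, hsdecomp]
      have hEE : (r1 + 1) * H.edgeCard = r1 * H.edgeCard + H.edgeCard := by ring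
      omega
    have h1 := hok j ⟨i, x⟩ hcond
    rw [hsdecomp, MSHypergraph.windowDeg_add (H := H) (f := f) j (r1 * H.edgeCard) p ⟨i, x⟩,
      MSHypergraph.windowDeg_mul ord j r1 ⟨i, x⟩,
      MSHypergraph.windowDeg_shift ord j r1 p ⟨i, x⟩, hdeg i hi x, hrdec] at h1
    omega
  have hweq : ∀ j, j + p ≤ H.edgeCard → ∀ (i : Fin k), (i : ℕ) < u → ∀ x : Fin (n i),
      H.windowDeg f j p ⟨i, x⟩ = r2 := by
    intro j hj i hi
    have hsum : ∑ x : Fin (n i), H.windowDeg f j p ⟨i, x⟩ = p :=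
      lamK_sum_part (k := k) (lam := lam) (n := n) f j p i
    have hconst : ∑ x : Fin (n i), H.windowDeg f j p ⟨i, x⟩ = ∑ _x : Fin (n i), r2 := by
      rw [hsum, Finset.sum_const, Finset.card_univ, Fintype.card_fin, heq i hi, smul_eq_mul, hp]
      have hcan : n (⟨0, by omega⟩ : Fin k) = n ⟨0, hk0⟩ := rfl
      rw [hcan]
      ring
    have hall := (Finset.sum_eq_sum_iff_of_le fun x _ => hwle j hj i hi x).mp hconst
    exact fun x => hall x (Finset.mem_univ x)
  have hstep : ∀ j, j + p < H.edgeCard → ∀ (i : Fin k), (i : ℕ) < u →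
      (f (j + p)).2 i = (f j).2 i := by
    intro j hj i hi
    have e1 := MSHypergraph.windowDeg_slide (H := H) (f := f) j p ⟨i, (f j).2 i⟩
    rw [hweq j (by omega) i hi, hweq (j + 1) (by omega) i hi] at e1
    have h2 : H.windowDeg f j 1 ⟨i, (f j).2 i⟩ = 1 := by
      rw [MSHypergraph.windowDeg_one (H := H) (f := f) j ⟨i, (f j).2 i⟩]
      have hinc : H.inc (f j) ⟨i, (f j).2 i⟩ = true := by
        show decide ((f j).2 i = (f j).2 i) = true
        simp
      simp [hinc]
    have h3 : H.windowDeg f (j + p) 1 ⟨i, (f j).2 i⟩ = 1 := by omega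
    rw [MSHypergraph.windowDeg_one (H := H) (f := f) (j + p) ⟨i, (f j).2 i⟩] at h3
    by_cases hb : H.inc (f (j + p)) ⟨i, (f j).2 i⟩ = true
    · have hd : decide ((f (j + p)).2 i = (f j).2 i) = true := hb
      simpa using hd
    · rw [if_neg hb] at h3; omega
  set ind : (∀ i, Fin (n i)) → ℕ → ℕ :=
    fun t j => if (∀ i : Fin k, (i : ℕ) < u → (f j).2 i = t i) then 1 else 0 with hind
  have hper : ∀ t j, j + p < H.edgeCard → ind t (j + p) = ind t j := by
    intro t j hj
    have hiff : (∀ i : Fin k, (i : ℕ) < u → (f (j + p)).2 i = t i)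
        ↔ (∀ i : Fin k, (i : ℕ) < u → (f j).2 i = t i) := by
      constructor <;> intro h i hi
      · rw [← hstep j hj i hi]; exact h i hi
      · rw [hstep j hj i hi]; exact h i hi
    simp only [hind]
    rw [if_congr hiff rfl rfl]
  have hm := fun t => MsAux.periodic_count (ind t) p H.edgeCard hppos (hper t)
  have htot : ∀ t, ∑ j ∈ Finset.range H.edgeCard, ind t j = lam * N' := by
    intro t
    have h1 : ∑ j ∈ Finset.range H.edgeCard, ind t j
        = ((Finset.range H.edgeCard).filter
            (fun j => ∀ i : Fin k, (i : ℕ) < u → (f j).2 i = t i)).card := by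
      rw [Finset.card_filter]
    rw [h1]
    have h2 := lamK_count_window (u := u) f ord t
    rw [hNN'] at h2
    exact h2
  have hsummt : ∑ t : ∀ i, Fin (n i), (∑ j ∈ Finset.range p, ind t j) = p * N' := by
    rw [Finset.sum_comm]
    have hinner : ∀ j, (∑ t : ∀ i, Fin (n i), ind t j) = N' := by
      intro j
      have h1 : (∑ t : ∀ i, Fin (n i), ind t j)
          = ((Finset.univ : Finset (∀ i, Fin (n i))).filter
              (fun t => ∀ i : Fin k, (i : ℕ) < u → (f j).2 i = t i)).card := by
        rw [Finset.card_filter]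
      rw [h1]
      have h2 := lamK_count_tuples (u := u) (c := (f j).2)
      rw [hNN'] at h2
      exact h2
    rw [Finset.sum_congr rfl fun j _ => hinner j, Finset.sum_const, Finset.card_range,
      smul_eq_mul]
  have hcardT : Fintype.card (∀ i, Fin (n i)) = n ⟨0, hk0⟩ ^ u * N' := by
    rw [Fintype.card_pi]
    simp only [Fintype.card_fin]
    rw [← Finset.prod_filter_mul_prod_filter_not Finset.univ (fun i : Fin k => (i : ℕ) < u) n]
    congr 1
    · calc ∏ i ∈ Finset.univ.filter (fun i : Fin k => (i : ℕ) < u), n i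
          = ∏ _i ∈ Finset.univ.filter (fun i : Fin k => (i : ℕ) < u), n ⟨0, hk0⟩ :=
            Finset.prod_congr rfl fun i hi => heq i (by simpa using (Finset.mem_filter.mp hi).2)
        _ = n ⟨0, hk0⟩ ^ u := by
            rw [Finset.prod_const, MsAux.card_filter_lt k u huk]
  set q := H.edgeCard / p with hqdef
  have hq : q = lam * N / r2 := by
    rw [hqdef, hε, hp, show lam * (n ⟨0, hk0⟩ * N) = (lam * N) * n ⟨0, hk0⟩ from by ring]
    exact Nat.mul_div_mul_right _ _ hn1pos
  have hbound : ∀ t : ∀ i, Fin (n i),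
      q * (∑ j ∈ Finset.range p, ind t j) ≤ lam * N'
        ∧ lam * N' ≤ q * (∑ j ∈ Finset.range p, ind t j)
            + (∑ j ∈ Finset.range p, ind t j) := by
    intro t
    obtain ⟨hA, hB⟩ := hm t
    rw [htot t] at hA
    constructor
    · rw [hA]; exact Nat.le_add_right _ _
    · rw [hA]; omega
  have hdpos : 0 < n ⟨0, hk0⟩ ^ (u - 1) := pow_pos hn1pos _
  have hdm2 := Nat.div_add_mod r2 (n ⟨0, hk0⟩ ^ (u - 1))
  have hmodpos : 0 < r2 % (n ⟨0, hk0⟩ ^ (u - 1)) :=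
    Nat.pos_of_ne_zero fun h => hdvd (Nat.dvd_of_mod_eq_zero h)
  have hmlt2 : r2 % (n ⟨0, hk0⟩ ^ (u - 1)) < n ⟨0, hk0⟩ ^ (u - 1) := Nat.mod_lt _ hdpos
  have hpowu : n ⟨0, hk0⟩ ^ u = n ⟨0, hk0⟩ * n ⟨0, hk0⟩ ^ (u - 1) := by
    conv_lhs => rw [show u = (u - 1) + 1 from by omega]
    rw [pow_succ']
  have hex1 : ∃ t : ∀ i, Fin (n i),
      (∑ j ∈ Finset.range p, ind t j) ≤ r2 / n ⟨0, hk0⟩ ^ (u - 1) := by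
    by_contra hc
    push_neg at hc
    have hge : Fintype.card (∀ i, Fin (n i)) * (r2 / n ⟨0, hk0⟩ ^ (u - 1) + 1)
        ≤ ∑ t : ∀ i, Fin (n i), (∑ j ∈ Finset.range p, ind t j) := by
      calc Fintype.card (∀ i, Fin (n i)) * (r2 / n ⟨0, hk0⟩ ^ (u - 1) + 1)
          = ∑ _t : ∀ i, Fin (n i), (r2 / n ⟨0, hk0⟩ ^ (u - 1) + 1) := by
            rw [Finset.sum_const, Finset.card_univ, smul_eq_mul]
        _ ≤ _ := Finset.sum_le_sum fun t _ => hc t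
    rw [hsummt, hcardT] at hge
    have h5 : r2 + 1 ≤ n ⟨0, hk0⟩ ^ (u - 1) * (r2 / n ⟨0, hk0⟩ ^ (u - 1) + 1) := by
      have hE : n ⟨0, hk0⟩ ^ (u - 1) * (r2 / n ⟨0, hk0⟩ ^ (u - 1) + 1)
          = n ⟨0, hk0⟩ ^ (u - 1) * (r2 / n ⟨0, hk0⟩ ^ (u - 1)) + n ⟨0, hk0⟩ ^ (u - 1) := by
        ring
      omega
    have h6 : (n ⟨0, hk0⟩ * (r2 + 1)) * N' ≤ (r2 * n ⟨0, hk0⟩) * N' := by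
      calc (n ⟨0, hk0⟩ * (r2 + 1)) * N'
          ≤ (n ⟨0, hk0⟩ * (n ⟨0, hk0⟩ ^ (u - 1) * (r2 / n ⟨0, hk0⟩ ^ (u - 1) + 1))) * N' := by
            apply Nat.mul_le_mul_right
            exact Nat.mul_le_mul_left _ h5
        _ = n ⟨0, hk0⟩ ^ u * N' * (r2 / n ⟨0, hk0⟩ ^ (u - 1) + 1) := by rw [hpowu]; ring
        _ ≤ p * N' := hge
        _ = (r2 * n ⟨0, hk0⟩) * N' := by rw [hp]
    have h7 : 0 < n ⟨0, hk0⟩ * N' := Nat.mul_pos hn1pos hN'pos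
    have h8 : (n ⟨0, hk0⟩ * (r2 + 1)) * N' = r2 * n ⟨0, hk0⟩ * N' + n ⟨0, hk0⟩ * N' := by ring
    omega
  have hex2 : ∃ t : ∀ i, Fin (n i),
      r2 / n ⟨0, hk0⟩ ^ (u - 1) + 1 ≤ ∑ j ∈ Finset.range p, ind t j := by
    by_contra hc
    push_neg at hc
    have hle' : ∑ t : ∀ i, Fin (n i), (∑ j ∈ Finset.range p, ind t j)
        ≤ Fintype.card (∀ i, Fin (n i)) * (r2 / n ⟨0, hk0⟩ ^ (u - 1)) := by
      calc ∑ t : ∀ i, Fin (n i), (∑ j ∈ Finset.range p, ind t j)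
          ≤ ∑ _t : ∀ i, Fin (n i), (r2 / n ⟨0, hk0⟩ ^ (u - 1)) :=
            Finset.sum_le_sum fun t _ => by have := hc t; omega
        _ = _ := by rw [Finset.sum_const, Finset.card_univ, smul_eq_mul]
    rw [hsummt, hcardT] at hle'
    have h5 : n ⟨0, hk0⟩ ^ (u - 1) * (r2 / n ⟨0, hk0⟩ ^ (u - 1)) + 1 ≤ r2 := by omega
    have h6 : (r2 * n ⟨0, hk0⟩) * N' ≤ ((r2 - 1) * n ⟨0, hk0⟩) * N' := by
      calc (r2 * n ⟨0, hk0⟩) * N' = p * N' := by rw [hp]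
        _ ≤ n ⟨0, hk0⟩ ^ u * N' * (r2 / n ⟨0, hk0⟩ ^ (u - 1)) := hle'
        _ = (n ⟨0, hk0⟩ ^ (u - 1) * (r2 / n ⟨0, hk0⟩ ^ (u - 1))) * n ⟨0, hk0⟩ * N' := by
            rw [hpowu]; ring
        _ ≤ ((r2 - 1) * n ⟨0, hk0⟩) * N' := by
            apply Nat.mul_le_mul_right
            apply Nat.mul_le_mul_right
            omega
    have h7 : 0 < n ⟨0, hk0⟩ * N' := Nat.mul_pos hn1pos hN'pos
    have h8 : (r2 * n ⟨0, hk0⟩) * N' = ((r2 - 1) * n ⟨0, hk0⟩) * N' + n ⟨0, hk0⟩ * N' := by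
      have hco : r2 = (r2 - 1) + 1 := by omega
      calc (r2 * n ⟨0, hk0⟩) * N' = (((r2 - 1) + 1) * n ⟨0, hk0⟩) * N' := by rw [← hco]
        _ = ((r2 - 1) * n ⟨0, hk0⟩) * N' + n ⟨0, hk0⟩ * N' := by ring
    omega
  obtain ⟨ta, hta⟩ := hex1
  obtain ⟨tb, htb⟩ := hex2
  refine Or.inr ⟨hr2pos, ?_, ?_⟩
  · calc (r2 / n ⟨0, hk0⟩ ^ (u - 1) + 1) * (lam * N / r2)
        ≤ (∑ j ∈ Finset.range p, ind tb j) * q := by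
          rw [← hq]
          exact Nat.mul_le_mul_right _ htb
      _ = q * (∑ j ∈ Finset.range p, ind tb j) := Nat.mul_comm _ _
      _ ≤ lam * N' := (hbound tb).1
  · calc lam * N'
        ≤ q * (∑ j ∈ Finset.range p, ind ta j) + (∑ j ∈ Finset.range p, ind ta j) :=
          (hbound ta).2
      _ ≤ q * (r2 / n ⟨0, hk0⟩ ^ (u - 1)) + (r2 / n ⟨0, hk0⟩ ^ (u - 1)) :=
          Nat.add_le_add (Nat.mul_le_mul_left _ hta) hta
      _ = (r2 / n ⟨0, hk0⟩ ^ (u - 1)) * (lam * N / r2 + 1) := by rw [← hq]; ring
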